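/- Let G be a rooted directed graph on a finite vertex set V containing all self-loops, with Root(G) = R, and let R' be a nonempty subset of V that differs from R in at most one element (the symmetric difference of R and R' has cardinality at most 1). Then for every rooted directed graph G' on V containing all self-loops with Root(G') = R', there exists a finite sequence of directed graphs G = G_1, G_2, …, G_j = G' on V, all containing all self-loops, such that every G_i is rooted, Root(G_i) ∈ {R, R'} for every i, and consecutive graphs of the sequence differ in exactly one (non-self-loop) edge. -/

import Mathlib

/-- `R` is a root component of the directed graph `G`: a nonempty set of vertices
that is strongly connected (any two members are joined by a directed path in `G`)
and has no incoming edge from outside. -/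
def IsRootComp {V : Type*} (G : V → V → Prop) (R : Set V) : Prop :=
  R.Nonempty ∧ (∀ u ∈ R, ∀ v ∈ R, Relation.ReflTransGen G u v) ∧
    ∀ p q : V, G p q → q ∈ R → p ∈ R

/-- The edge set of a directed graph given as a relation. -/
def edgeSet {V : Type*} (G : V → V → Prop) : Set (V × V) :=
  {e : V × V | G e.1 e.2}

/-- Two directed graphs on the same vertex set differ in exactly one
(non-self-loop) edge: the symmetric difference of their edge sets is a
single edge `(u, v)` with `u ≠ v`. -/
def DifferOneEdge {V : Type*} (G G' : V → V → Prop) : Prop :=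
  ∃ e : V × V, e.1 ≠ e.2 ∧ symmDiff (edgeSet G) (edgeSet G') = {e}

open Relation

section Aux
variable {V : Type*}

/-- Strengthened rootedness: root component plus all vertices reachable from it. -/
def RGood (G : V → V → Prop) (R : Set V) : Prop :=
  IsRootComp G R ∧ ∀ v : V, ∃ r ∈ R, ReflTransGen G r v

lemma pullback {G : V → V → Prop} {S : Set V}
    (hScl : ∀ p q : V, G p q → q ∈ S → p ∈ S) :
    ∀ a b, ReflTransGen G a b → b ∈ S → a ∈ S := by
  intro a b hab
  induction hab with
  | refl => exact id
  | tail h1 h2 ih => exact fun hb => ih (hScl _ _ h2 hb)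

lemma RGood.unique {G : V → V → Prop} {R : Set V} (h : RGood G R) :
    ∀ S, IsRootComp G S → S = R := by
  intro S hS
  obtain ⟨⟨hRne, hRconn, hRcl⟩, hreach⟩ := h
  obtain ⟨⟨s, hs⟩, hSconn, hScl⟩ := hS
  obtain ⟨r, hr, hrs⟩ := hreach s
  have hrS : r ∈ S := pullback hScl _ _ hrs hs
  apply Set.eq_of_subset_of_subset
  · intro s' hs'
    exact pullback hRcl _ _ (hSconn s' hs' r hrS) hr
  · intro r' hr'
    exact pullback hScl _ _ (hRconn r' hr' r hr) hrS

lemma rgood_of_unique [Fintype V] {G : V → V → Prop} {R : Set V}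
    (hR : IsRootComp G R) (hRu : ∀ S, IsRootComp G S → S = R) : RGood G R := by
  classical
  refine ⟨hR, fun v => ?_⟩
  have hAne : ({x | ReflTransGen G x v} : Set V).Nonempty := ⟨v, ReflTransGen.refl⟩
  obtain ⟨x, hxA, hxmin⟩ := Set.exists_min_image {x | ReflTransGen G x v}
    (fun x => {y | ReflTransGen G y x}.ncard) (Set.toFinite _) hAne
  have hxp : ∀ p, ReflTransGen G p x → ReflTransGen G x p := by
    intro p hpx
    by_contra hnp
    have hsub : {y | ReflTransGen G y p} ⊂ {y | ReflTransGen G y x} := by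
      constructor
      · intro y hy; exact hy.trans hpx
      · intro hcon
        exact hnp (hcon ReflTransGen.refl)
    have hlt := Set.ncard_lt_ncard hsub (Set.toFinite _)
    have hpA : p ∈ {x | ReflTransGen G x v} := hpx.trans hxA
    have := hxmin p hpA
    omega
  have hSroot : IsRootComp G {y | ReflTransGen G x y ∧ ReflTransGen G y x} := by
    refine ⟨⟨x, ReflTransGen.refl, ReflTransGen.refl⟩, ?_, ?_⟩
    · intro u hu w hw; exact hu.2.trans hw.1
    · intro p q hpq hq
      have hpx : ReflTransGen G p x := (ReflTransGen.single hpq).trans hq.2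
      exact ⟨hxp p hpx, hpx⟩
  have hSR := hRu _ hSroot
  refine ⟨x, ?_, hxA⟩
  rw [← hSR]; exact ⟨ReflTransGen.refl, ReflTransGen.refl⟩

lemma DifferOneEdge.symm {A B : V → V → Prop} :
    DifferOneEdge A B → DifferOneEdge B A :=
  fun ⟨e, h1, h2⟩ => ⟨e, h1, by rwa [symmDiff_comm]⟩

/-- A walk in graph space, changing one edge at a time, with all graphs satisfying `P`. -/
def OkWalk (P : (V → V → Prop) → Prop) (A B : V → V → Prop) : Prop :=
  ∃ (j : ℕ) (Gs : ℕ → V → V → Prop), Gs 0 = A ∧ Gs j = B ∧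
    (∀ i ≤ j, P (Gs i)) ∧ (∀ i < j, DifferOneEdge (Gs i) (Gs (i + 1)))

lemma OkWalk.refl {P : (V → V → Prop) → Prop} {A : V → V → Prop} (hA : P A) :
    OkWalk P A A :=
  ⟨0, fun _ => A, rfl, rfl, fun _ _ => hA, fun i hi => absurd hi (Nat.not_lt_zero i)⟩

lemma OkWalk.symm {P : (V → V → Prop) → Prop} {A B : V → V → Prop}
    (h : OkWalk P A B) : OkWalk P B A := by
  obtain ⟨j, Gs, h0, h1, hP, hD⟩ := h
  refine ⟨j, fun i => Gs (j - i), by simpa, by simpa, fun i hi => hP _ (Nat.sub_le _ _), ?_⟩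
  intro i hi
  have h1' : j - (i + 1) + 1 = j - i := by omega
  have := (hD (j - (i + 1)) (by omega)).symm
  rwa [h1'] at this

lemma OkWalk.trans {P : (V → V → Prop) → Prop} {A B C : V → V → Prop}
    (h1 : OkWalk P A B) (h2 : OkWalk P B C) : OkWalk P A C := by
  obtain ⟨j1, Gs1, e10, e11, hP1, hD1⟩ := h1
  obtain ⟨j2, Gs2, e20, e21, hP2, hD2⟩ := h2
  refine ⟨j1 + j2, fun i => if i ≤ j1 then Gs1 i else Gs2 (i - j1), by simpa, ?_, ?_, ?_⟩
  · by_cases h : j2 = 0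
    · subst h
      simp only [Nat.add_zero, le_refl, if_pos]
      rw [e11, ← e20]
      exact e21
    · simp only [if_neg (show ¬ j1 + j2 ≤ j1 by omega)]
      rw [show j1 + j2 - j1 = j2 by omega]
      exact e21
  · intro i hi
    by_cases h : i ≤ j1
    · simpa [h] using hP1 i h
    · simpa [h] using hP2 (i - j1) (by omega)
  · intro i hi
    by_cases h : i + 1 ≤ j1
    · simp only [if_pos h, if_pos (by omega : i ≤ j1)]
      exact hD1 i (by omega)
    · by_cases h' : i ≤ j1
      · have hij : i = j1 := by omega
        simp only [if_pos h', if_neg h]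
        rw [hij, e11, ← e20, show j1 + 1 - j1 = 1 by omega]
        exact hD2 0 (by omega)
      · simp only [if_neg h', if_neg h]
        rw [show i + 1 - j1 = (i - j1) + 1 by omega]
        exact hD2 (i - j1) (by omega)

lemma symmDiff_union_singleton {α : Type*} (S : Set α) (e : α) (he : e ∉ S) :
    symmDiff S (S ∪ {e}) = {e} := by
  ext f
  simp only [Set.mem_symmDiff, Set.mem_union, Set.mem_singleton_iff]
  constructor
  · rintro (⟨hf, hnf⟩ | ⟨hf | hf, hnf⟩) <;> tauto
  · rintro rfl; tauto

lemma chain_walk [Fintype V] {P : (V → V → Prop) → Prop} {A B : V → V → Prop}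
    (hAB : ∀ p q, A p q → B p q) (hAself : ∀ p, A p p)
    (hP : ∀ H : V → V → Prop, (∀ p q, A p q → H p q) → (∀ p q, H p q → B p q) → P H) :
    OkWalk P A B := by
  classical
  have hfin : (edgeSet B \ edgeSet A).Finite := Set.toFinite _
  set l := hfin.toFinset.toList with hl
  have hnd : l.Nodup := Finset.nodup_toList _
  have hmem : ∀ e, e ∈ l ↔ e ∈ edgeSet B \ edgeSet A := by
    intro e; rw [hl, Finset.mem_toList, Set.Finite.mem_toFinset]
  refine ⟨l.length, fun i p q => A p q ∨ (p, q) ∈ l.take i, ?_, ?_, ?_, ?_⟩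
  · funext p q; simp
  · funext p q
    simp only [List.take_length]
    apply propext
    constructor
    · rintro (h | h)
      · exact hAB _ _ h
      · exact ((hmem _).1 h).1
    · intro h
      by_cases hA : A p q
      · exact Or.inl hA
      · exact Or.inr ((hmem _).2 ⟨h, hA⟩)
  · intro i hi
    apply hP
    · intro p q h; exact Or.inl h
    · rintro p q (h | h)
      · exact hAB _ _ h
      · exact ((hmem _).1 (List.mem_of_mem_take h)).1
  · intro i hi
    set e := l[i]'hi with he
    have heD : e ∈ edgeSet B \ edgeSet A := (hmem _).1 (List.getElem_mem hi)
    have hene : e.1 ≠ e.2 := by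
      intro hc
      exact heD.2 (show A e.1 e.2 from hc ▸ hAself e.1)
    have hnotin : e ∉ l.take i := by
      intro hcon
      have hnd2 : (l.take i ++ l.drop i).Nodup := by rwa [List.take_append_drop]
      have hdisj := List.disjoint_of_nodup_append hnd2
      have hedrop : e ∈ l.drop i := by
        rw [List.drop_eq_getElem_cons hi]
        exact List.mem_cons_self
      exact hdisj hcon hedrop
    have htake : ∀ f : V × V, f ∈ l.take (i + 1) ↔ f ∈ l.take i ∨ f = e := by
      intro f
      rw [List.take_succ, List.getElem?_eq_getElem hi]
      simp only [Option.toList_some, List.mem_append, List.mem_singleton, he]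
    refine ⟨e, hene, ?_⟩
    have hset : edgeSet (fun p q => A p q ∨ (p, q) ∈ l.take (i + 1)) =
        edgeSet (fun p q => A p q ∨ (p, q) ∈ l.take i) ∪ {e} := by
      ext f
      simp only [edgeSet, Set.mem_setOf_eq, Set.mem_union, Set.mem_singleton_iff, htake]
      tauto
    rw [hset]
    apply symmDiff_union_singleton
    intro hcon
    simp only [edgeSet, Set.mem_setOf_eq] at hcon
    rcases hcon with h | h
    · exact heD.2 h
    · exact hnotin (by simpa using h)

/-- The canonical graph with root `S`: all edges out of `S`, plus self-loops. -/
def Cg (S : Set V) : V → V → Prop := fun p q => p ∈ S ∨ p = q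

/-- The predicate each graph along the walk must satisfy. -/
def WalkP (R R' : Set V) (H : V → V → Prop) : Prop :=
  (∀ p, H p p) ∧ ∃ Ri : Set V, IsRootComp H Ri ∧
    (∀ S : Set V, IsRootComp H S → S = Ri) ∧ (Ri = R ∨ Ri = R')

lemma rgood_Cg {S : Set V} (hS : S.Nonempty) : RGood (Cg S) S := by
  obtain ⟨r, hr⟩ := hS
  refine ⟨⟨⟨r, hr⟩, ?_, ?_⟩, ?_⟩
  · intro u hu v hv; exact ReflTransGen.single (Or.inl hu)
  · rintro p q (h | h) hq
    · exact h
    · exact h ▸ hq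
  · intro v; exact ⟨r, hr, ReflTransGen.single (Or.inl hr)⟩

/-- Walk from any graph `H` with all vertices reachable from root `S` to the
canonical graph `Cg S`, all intermediate graphs having root `S`. -/
lemma walk_to_can [Fintype V] {P : (V → V → Prop) → Prop} (H : V → V → Prop) (S : Set V)
    (hself : ∀ p, H p p) (hgood : RGood H S)
    (hPS : ∀ Hm : V → V → Prop, (∀ p, Hm p p) → RGood Hm S → P Hm) :
    OkWalk P H (Cg S) := by
  obtain ⟨⟨hSne, hSconn, hScl⟩, hreach⟩ := hgood
  have w1 : OkWalk P H (fun p q => H p q ∨ p ∈ S) := by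
    apply chain_walk (fun p q h => Or.inl h) hself
    intro Hm hlo hhi
    have hms : ∀ p, Hm p p := fun p => hlo _ _ (hself p)
    apply hPS _ hms
    refine ⟨⟨hSne, ?_, ?_⟩, ?_⟩
    · intro u hu v hv
      exact ReflTransGen.mono (fun a b h => hlo a b h) _ _ (hSconn u hu v hv)
    · intro p q hpq hq
      rcases hhi _ _ hpq with h | h
      · exact hScl _ _ h hq
      · exact h
    · intro v
      obtain ⟨r, hr, hrv⟩ := hreach v
      exact ⟨r, hr, ReflTransGen.mono (fun a b h => hlo a b h) _ _ hrv⟩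
  have w2 : OkWalk P (Cg S) (fun p q => H p q ∨ p ∈ S) := by
    apply chain_walk
    · rintro p q (h | h)
      · exact Or.inr h
      · exact Or.inl (h ▸ hself p)
    · intro p; exact Or.inr rfl
    intro Hm hlo hhi
    have hms : ∀ p, Hm p p := fun p => hlo _ _ (Or.inr rfl)
    apply hPS _ hms
    refine ⟨⟨hSne, ?_, ?_⟩, ?_⟩
    · intro u hu v hv; exact ReflTransGen.single (hlo _ _ (Or.inl hu))
    · intro p q hpq hq
      rcases hhi _ _ hpq with h | h
      · exact hScl _ _ h hq
      · exact h
    · intro v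
      obtain ⟨r, hr⟩ := hSne
      exact ⟨r, hr, ReflTransGen.single (hlo _ _ (Or.inl hr))⟩
  exact w1.trans w2.symm

/-- Walk between the canonical graphs of `S` and `insert x S`. -/
lemma walk_insert [Fintype V] {P : (V → V → Prop) → Prop} (S : Set V) (x : V)
    (hS : S.Nonempty)
    (hPm : ∀ Hm : V → V → Prop, (∀ p, Hm p p) →
      (RGood Hm S ∨ RGood Hm (insert x S)) → P Hm) :
    OkWalk P (Cg S) (Cg (insert x S)) := by
  obtain ⟨r₀, hr₀⟩ := hS
  set M : V → V → Prop := fun p q => Cg S p q ∨ (p = x ∧ q = r₀) with hM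
  have w1 : OkWalk P (Cg S) M := by
    apply chain_walk (A := Cg S) (B := M) (fun p q h => Or.inl h) (fun p => Or.inr rfl)
    intro Hm hlo hhi
    have hms : ∀ p, Hm p p := fun p => hlo _ _ (Or.inr rfl)
    apply hPm _ hms
    by_cases hcase : Hm x r₀
    · right
      refine ⟨⟨⟨x, Set.mem_insert _ _⟩, ?_, ?_⟩, ?_⟩
      · intro u hu v hv
        rcases Set.mem_insert_iff.1 hu with rfl | hu
        · exact (ReflTransGen.single hcase).trans
            (ReflTransGen.single (hlo _ _ (Or.inl hr₀)))
        · exact ReflTransGen.single (hlo _ _ (Or.inl hu))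
      · intro p q hpq hq
        rcases hhi _ _ hpq with (h | h) | ⟨h1, h2⟩
        · exact Set.mem_insert_of_mem _ h
        · exact h ▸ hq
        · exact h1 ▸ Set.mem_insert _ _
      · intro v
        exact ⟨r₀, Set.mem_insert_of_mem _ hr₀,
          ReflTransGen.single (hlo _ _ (Or.inl hr₀))⟩
    · left
      refine ⟨⟨⟨r₀, hr₀⟩, ?_, ?_⟩, ?_⟩
      · intro u hu v hv; exact ReflTransGen.single (hlo _ _ (Or.inl hu))
      · intro p q hpq hq
        rcases hhi _ _ hpq with (h | h) | ⟨h1, h2⟩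
        · exact h
        · exact h ▸ hq
        · exact absurd (show Hm x r₀ from h1 ▸ h2 ▸ hpq) hcase
      · intro v; exact ⟨r₀, hr₀, ReflTransGen.single (hlo _ _ (Or.inl hr₀))⟩
  have w2 : OkWalk P M (Cg (insert x S)) := by
    apply chain_walk (A := M) (B := Cg (insert x S))
    · rintro p q ((h | h) | ⟨h1, h2⟩)
      · exact Or.inl (Set.mem_insert_of_mem _ h)
      · exact Or.inr h
      · exact Or.inl (h1 ▸ Set.mem_insert _ _)
    · intro p; exact Or.inl (Or.inr rfl)
    intro Hm hlo hhi
    have hms : ∀ p, Hm p p := fun p => hlo _ _ (Or.inl (Or.inr rfl))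
    apply hPm _ hms
    right
    refine ⟨⟨⟨x, Set.mem_insert _ _⟩, ?_, ?_⟩, ?_⟩
    · intro u hu v hv
      rcases Set.mem_insert_iff.1 hu with rfl | hu
      · exact (ReflTransGen.single (hlo _ _ (Or.inr ⟨rfl, rfl⟩))).trans
          (ReflTransGen.single (hlo _ _ (Or.inl (Or.inl hr₀))))
      · exact ReflTransGen.single (hlo _ _ (Or.inl (Or.inl hu)))
    · intro p q hpq hq
      rcases hhi _ _ hpq with h | h
      · exact h
      · exact h ▸ hq
    · intro v
      exact ⟨r₀, Set.mem_insert_of_mem _ hr₀,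
        ReflTransGen.single (hlo _ _ (Or.inl (Or.inl hr₀)))⟩
  exact w1.trans w2

end Aux

/-- If `G` is rooted with root `R` and `R'` is a nonempty set differing from `R` in
at most one element, then every rooted graph `G'` with root `R'` can be reached
from `G` by changing one edge at a time, with all intermediate graphs rooted and
their root components among `{R, R'}`. -/
theorem single_step_root_transition {V : Type*} [Fintype V]
    (G : V → V → Prop) (hGself : ∀ p, G p p)
    (R : Set V) (hR : IsRootComp G R) (hRu : ∀ S : Set V, IsRootComp G S → S = R)
    (R' : Set V) (hR'ne : R'.Nonempty) (hdiff : (symmDiff R R').ncard ≤ 1) :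
    ∀ G' : V → V → Prop, (∀ p, G' p p) →
      IsRootComp G' R' → (∀ S : Set V, IsRootComp G' S → S = R') →
      ∃ (j : ℕ) (Gs : ℕ → V → V → Prop),
        Gs 0 = G ∧ Gs j = G' ∧
        (∀ i ≤ j, (∀ p, Gs i p p) ∧
          ∃ Ri : Set V, IsRootComp (Gs i) Ri ∧
            (∀ S : Set V, IsRootComp (Gs i) S → S = Ri) ∧ (Ri = R ∨ Ri = R')) ∧
        (∀ i < j, DifferOneEdge (Gs i) (Gs (i + 1))) := by
  intro G' hG'self hR' hR'u
  classical
  have hRne : R.Nonempty := hR.1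
  have hPofR : ∀ H : V → V → Prop, (∀ p, H p p) → RGood H R → WalkP R R' H :=
    fun H hs hg => ⟨hs, R, hg.1, hg.unique, Or.inl rfl⟩
  have hPofR' : ∀ H : V → V → Prop, (∀ p, H p p) → RGood H R' → WalkP R R' H :=
    fun H hs hg => ⟨hs, R', hg.1, hg.unique, Or.inr rfl⟩
  have hGgood : RGood G R := rgood_of_unique hR hRu
  have hG'good : RGood G' R' := rgood_of_unique hR' hR'u
  have wA : OkWalk (WalkP R R') G (Cg R) := walk_to_can G R hGself hGgood hPofR
  have wC : OkWalk (WalkP R R') G' (Cg R') := walk_to_can G' R' hG'self hG'good hPofR'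
  have wB : OkWalk (WalkP R R') (Cg R) (Cg R') := by
    rcases Nat.le_one_iff_eq_zero_or_eq_one.1 hdiff with h0 | h1
    · have hempty : symmDiff R R' = ∅ :=
        ((Set.ncard_eq_zero (Set.toFinite _)).1 h0)
      have hRR : R = R' := by
        have := symmDiff_eq_bot.1 (by rw [Set.bot_eq_empty]; exact hempty)
        exact this
      have hC : (Cg R : V → V → Prop) = Cg R' := by rw [hRR]
      rw [hC]
      exact OkWalk.refl (hPofR' _ (fun p => Or.inr rfl) (rgood_Cg hR'ne))
    · obtain ⟨x, hx⟩ := Set.ncard_eq_one.1 h1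
      have hxmem : x ∈ symmDiff R R' := by rw [hx]; rfl
      rw [Set.mem_symmDiff] at hxmem
      by_cases hxR : x ∈ R
      · have hxR' : x ∉ R' := by
          rcases hxmem with ⟨_, h⟩ | ⟨_, h⟩
          · exact h
          · exact absurd hxR h
        have hRI : R = insert x R' := by
          ext y
          constructor
          · intro hy
            by_cases hy' : y ∈ R'
            · exact Set.mem_insert_of_mem _ hy'
            · have : y ∈ symmDiff R R' := Set.mem_symmDiff.2 (Or.inl ⟨hy, hy'⟩)
              rw [hx] at this
              exact this ▸ Set.mem_insert _ _
          · intro hy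
            rcases Set.mem_insert_iff.1 hy with rfl | hy
            · exact hxR
            · by_contra hyR
              have : y ∈ symmDiff R R' := Set.mem_symmDiff.2 (Or.inr ⟨hy, hyR⟩)
              rw [hx] at this
              exact hxR' (this ▸ hy)
        have w := walk_insert (P := WalkP R R') R' x hR'ne
          (fun Hm hs hg => hg.elim (hPofR' Hm hs) (fun h => hPofR Hm hs (by rw [hRI]; exact h)))
        rw [← hRI] at w
        exact w.symm
      · have hxR'' : x ∈ R' := by
          rcases hxmem with ⟨h, _⟩ | ⟨h, _⟩
          · exact absurd h hxR
          · exact h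
        have hRI : R' = insert x R := by
          ext y
          constructor
          · intro hy
            by_cases hy' : y ∈ R
            · exact Set.mem_insert_of_mem _ hy'
            · have : y ∈ symmDiff R R' := Set.mem_symmDiff.2 (Or.inr ⟨hy, hy'⟩)
              rw [hx] at this
              exact this ▸ Set.mem_insert _ _
          · intro hy
            rcases Set.mem_insert_iff.1 hy with rfl | hy
            · exact hxR''
            · by_contra hyR
              have : y ∈ symmDiff R R' := Set.mem_symmDiff.2 (Or.inl ⟨hy, hyR⟩)
              rw [hx] at this
              exact hxR (this ▸ hy)
        have w := walk_insert (P := WalkP R R') R x hRne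
          (fun Hm hs hg => hg.elim (hPofR Hm hs) (fun h => hPofR' Hm hs (by rw [hRI]; exact h)))
        rw [← hRI] at w
        exact w
  obtain ⟨j, Gs, h0, h1, hP, hD⟩ := wA.trans (wB.trans wC.symm)
  exact ⟨j, Gs, h0, h1, fun i hi => ⟨(hP i hi).1, (hP i hi).2⟩, hD⟩
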